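/- For every d ∈ ℂ, the linear map φ_d of the centerless twisted Heisenberg–Virasoro algebra 𝒲 defined on basis elements by φ_d(L_n) = L_n + d·I_n and φ_d(I_n) = I_n for all n ∈ ℤ is a Lie algebra endomorphism of 𝒲; consequently, the twisted bracket [x,y]_{φ_d} := φ_d([x,y]) together with the twist φ_d defines a multiplicative Hom-Lie algebra structure on 𝒲, which is nontrivial when d ≠ 0. -/

import Mathlib

/-- Basis of the centerless twisted Heisenberg–Virasoro algebra. -/
inductive WBasis
  | L : ℤ → WBasis
  | I : ℤ → WBasis

/-- The underlying ℂ-vector space with basis `{L n, I n : n ∈ ℤ}`. -/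
abbrev W : Type := WBasis →₀ ℂ

noncomputable def Ln (n : ℤ) : W := Finsupp.single (WBasis.L n) 1
noncomputable def In (n : ℤ) : W := Finsupp.single (WBasis.I n) 1

/-- Bracket on basis elements:
`[L n, L m] = (n-m) L (n+m)`, `[L n, I m] = -m I (n+m)`, `[I n, I m] = 0`. -/
noncomputable def brkt : WBasis → WBasis → W
  | WBasis.L n, WBasis.L m => ((n : ℂ) - m) • Ln (n + m)
  | WBasis.L n, WBasis.I m => (-(m : ℂ)) • In (n + m)
  | WBasis.I n, WBasis.L m => (n : ℂ) • In (m + n)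
  | WBasis.I _, WBasis.I _ => 0

/-- The bilinear extension of `brkt` to all of `W`. -/
noncomputable def br : W →ₗ[ℂ] W →ₗ[ℂ] W :=
  Finsupp.lift (W →ₗ[ℂ] W) ℂ WBasis fun i =>
    Finsupp.lift W ℂ WBasis fun j => brkt i j

/-- The linear map determined on basis elements by
`φ_d(L n) = L n + d • I n` and `φ_d(I n) = I n`. -/
noncomputable def φd (d : ℂ) : W →ₗ[ℂ] W :=
  Finsupp.lift W ℂ WBasis fun i =>
    match i with
    | WBasis.L n => Ln n + d • In n
    | WBasis.I n => In n

lemma br_single (i j : WBasis) :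
    br (Finsupp.single i 1) (Finsupp.single j 1) = brkt i j := by
  simp [br, Finsupp.lift_apply, Finsupp.sum_single_index]

lemma φd_L (d : ℂ) (n : ℤ) : φd d (Finsupp.single (WBasis.L n) 1) = Ln n + d • In n := by
  simp [φd, Finsupp.lift_apply, Finsupp.sum_single_index]

lemma φd_I (d : ℂ) (n : ℤ) : φd d (Finsupp.single (WBasis.I n) 1) = In n := by
  simp [φd, Finsupp.lift_apply, Finsupp.sum_single_index]

lemma br_LL (n m : ℤ) : br (Ln n) (Ln m) = ((n : ℂ) - m) • Ln (n + m) := by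
  simpa [Ln, brkt] using br_single (WBasis.L n) (WBasis.L m)

lemma br_LI (n m : ℤ) : br (Ln n) (In m) = (-(m : ℂ)) • In (n + m) := by
  simpa [Ln, In, brkt] using br_single (WBasis.L n) (WBasis.I m)

lemma br_IL (n m : ℤ) : br (In n) (Ln m) = (n : ℂ) • In (m + n) := by
  simpa [Ln, In, brkt] using br_single (WBasis.I n) (WBasis.L m)

lemma br_II (n m : ℤ) : br (In n) (In m) = 0 := by
  simpa [In, brkt] using br_single (WBasis.I n) (WBasis.I m)

lemma φd_Ln (d : ℂ) (n : ℤ) : φd d (Ln n) = Ln n + d • In n := φd_L d n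
lemma φd_In (d : ℂ) (n : ℤ) : φd d (In n) = In n := φd_I d n

lemma hom (d : ℂ) (x y : W) : φd d (br x y) = br (φd d x) (φd d y) := by
  induction x using Finsupp.induction_linear with
  | zero => simp
  | add f g hf hg => simp [map_add, LinearMap.add_apply, hf, hg]
  | single i c =>
    rw [show (Finsupp.single i c : W) = c • Finsupp.single i 1 by
      rw [Finsupp.smul_single, smul_eq_mul, mul_one]]
    simp only [map_smul, LinearMap.smul_apply]
    congr 1
    induction y using Finsupp.induction_linear with
    | zero => simp
    | add f g hf hg => simp [map_add, hf, hg]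
    | single j e =>
      rw [show (Finsupp.single j e : W) = e • Finsupp.single j 1 by
        rw [Finsupp.smul_single, smul_eq_mul, mul_one]]
      simp only [map_smul, LinearMap.smul_apply]
      congr 1
      cases i with
      | L n =>
        cases j with
        | L m =>
          show φd d (br (Ln n) (Ln m)) = br (φd d (Ln n)) (φd d (Ln m))
          rw [br_LL, map_smul, φd_Ln, φd_Ln, φd_Ln]
          simp only [map_add, map_smul, LinearMap.add_apply, LinearMap.smul_apply,
            br_LL, br_LI, br_IL, br_II]
          rw [show m + n = n + m by ring]
          module
        | I m =>
          show φd d (br (Ln n) (In m)) = br (φd d (Ln n)) (φd d (In m))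
          rw [br_LI, map_smul, φd_In, φd_Ln, φd_In]
          simp only [map_add, map_smul, LinearMap.add_apply, LinearMap.smul_apply,
            br_LI, br_II]
          module
      | I n =>
        cases j with
        | L m =>
          show φd d (br (In n) (Ln m)) = br (φd d (In n)) (φd d (Ln m))
          rw [br_IL, map_smul, φd_In, φd_In, φd_Ln]
          simp only [map_add, map_smul, br_IL, br_II]
          module
        | I m =>
          show φd d (br (In n) (In m)) = br (φd d (In n)) (φd d (In m))
          rw [br_II, φd_In, φd_In, br_II, map_zero]

lemma skew (x y : W) : br x y = - br y x := by
  induction x using Finsupp.induction_linear with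
  | zero => simp
  | add f g hf hg => simp only [map_add, LinearMap.add_apply, hf, hg]; abel
  | single i c =>
    rw [show (Finsupp.single i c : W) = c • Finsupp.single i 1 by
      rw [Finsupp.smul_single, smul_eq_mul, mul_one]]
    simp only [map_smul, LinearMap.smul_apply, ← smul_neg]
    congr 1
    induction y using Finsupp.induction_linear with
    | zero => simp
    | add f g hf hg => simp only [map_add, LinearMap.add_apply, hf, hg]; abel
    | single j e =>
      rw [show (Finsupp.single j e : W) = e • Finsupp.single j 1 by
        rw [Finsupp.smul_single, smul_eq_mul, mul_one]]
      simp only [map_smul, LinearMap.smul_apply, ← smul_neg]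
      congr 1
      cases i with
      | L n =>
        cases j with
        | L m =>
          show br (Ln n) (Ln m) = - br (Ln m) (Ln n)
          rw [br_LL, br_LL, show m + n = n + m by ring]; module
        | I m =>
          show br (Ln n) (In m) = - br (In m) (Ln n)
          rw [br_LI, br_IL]; module
      | I n =>
        cases j with
        | L m =>
          show br (In n) (Ln m) = - br (Ln m) (In n)
          rw [br_IL, br_LI]; module
        | I m =>
          show br (In n) (In m) = - br (In m) (In n)
          rw [br_II, br_II, neg_zero]

lemma jacobi (x y z : W) :
    br x (br y z) + br y (br z x) + br z (br x y) = 0 := by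
  induction x using Finsupp.induction_linear with
  | zero => simp
  | add f g hf hg =>
    simp only [map_add, LinearMap.add_apply]
    linear_combination (norm := abel) hf + hg
  | single i c =>
    rw [show (Finsupp.single i c : W) = c • Finsupp.single i 1 by
      rw [Finsupp.smul_single, smul_eq_mul, mul_one]]
    simp only [map_smul, LinearMap.smul_apply]
    rw [← smul_add, ← smul_add]
    refine smul_eq_zero_of_right c ?_
    induction y using Finsupp.induction_linear with
    | zero => simp
    | add f g hf hg =>
      simp only [map_add, LinearMap.add_apply]
      linear_combination (norm := abel) hf + hg
    | single j e =>
      rw [show (Finsupp.single j e : W) = e • Finsupp.single j 1 by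
        rw [Finsupp.smul_single, smul_eq_mul, mul_one]]
      simp only [map_smul, LinearMap.smul_apply]
      rw [← smul_add, ← smul_add]
      refine smul_eq_zero_of_right e ?_
      induction z using Finsupp.induction_linear with
      | zero => simp
      | add f g hf hg =>
        simp only [map_add, LinearMap.add_apply]
        linear_combination (norm := abel) hf + hg
      | single k f =>
        rw [show (Finsupp.single k f : W) = f • Finsupp.single k 1 by
          rw [Finsupp.smul_single, smul_eq_mul, mul_one]]
        simp only [map_smul, LinearMap.smul_apply]
        rw [← smul_add, ← smul_add]
        refine smul_eq_zero_of_right f ?_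
        cases i with
        | L n =>
          cases j with
          | L m =>
            cases k with
            | L p =>
              show br (Ln n) (br (Ln m) (Ln p)) + br (Ln m) (br (Ln p) (Ln n)) +
                br (Ln p) (br (Ln n) (Ln m)) = 0
              simp only [br_LL, map_smul, br_LL]
              rw [show m + (p + n) = n + (m + p) by ring,
                show p + (n + m) = n + (m + p) by ring]
              module
            | I p =>
              show br (Ln n) (br (Ln m) (In p)) + br (Ln m) (br (In p) (Ln n)) +
                br (In p) (br (Ln n) (Ln m)) = 0
              simp only [br_LL, br_LI, br_IL, map_smul]
              rw [show m + (n + p) = n + (m + p) by ring,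
                show n + m + p = n + (m + p) by ring]
              module
          | I m =>
            cases k with
            | L p =>
              show br (Ln n) (br (In m) (Ln p)) + br (In m) (br (Ln p) (Ln n)) +
                br (Ln p) (br (Ln n) (In m)) = 0
              simp only [br_LL, br_LI, br_IL, map_smul]
              rw [show p + n + m = n + (p + m) by ring,
                show p + (n + m) = n + (p + m) by ring]
              module
            | I p =>
              show br (Ln n) (br (In m) (In p)) + br (In m) (br (In p) (Ln n)) +
                br (In p) (br (Ln n) (In m)) = 0
              simp [br_II, br_IL, br_LI, map_smul]
        | I n =>
          cases j with
          | L m =>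
            cases k with
            | L p =>
              show br (In n) (br (Ln m) (Ln p)) + br (Ln m) (br (Ln p) (In n)) +
                br (Ln p) (br (In n) (Ln m)) = 0
              simp only [br_LL, br_LI, br_IL, map_smul]
              rw [show m + p + n = m + (p + n) by ring,
                show p + (m + n) = m + (p + n) by ring]
              module
            | I p =>
              show br (In n) (br (Ln m) (In p)) + br (Ln m) (br (In p) (In n)) +
                br (In p) (br (In n) (Ln m)) = 0
              simp [br_II, br_IL, br_LI, map_smul]
          | I m =>
            cases k with
            | L p =>
              show br (In n) (br (In m) (Ln p)) + br (In m) (br (Ln p) (In n)) +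
                br (Ln p) (br (In n) (In m)) = 0
              simp [br_II, br_IL, br_LI, map_smul]
            | I p =>
              show br (In n) (br (In m) (In p)) + br (In m) (br (In p) (In n)) +
                br (In p) (br (In n) (In m)) = 0
              simp [br_II]

/-- `φ_d` is a Lie algebra endomorphism of the centerless twisted
Heisenberg–Virasoro algebra; consequently the twisted bracket
`[x,y]_{φ_d} := φ_d [x,y]` together with `φ_d` is a multiplicative Hom-Lie
algebra structure (skew-symmetry, Hom-Jacobi identity, multiplicativity),
which is nontrivial when `d ≠ 0`. -/
theorem φd_hom_lie_structure (d : ℂ) :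
    (∀ x y : W, φd d (br x y) = br (φd d x) (φd d y)) ∧
    (∀ x y : W, φd d (br x y) = -φd d (br y x)) ∧
    (∀ x y z : W,
      φd d (br (φd d x) (φd d (br y z))) + φd d (br (φd d y) (φd d (br z x))) +
        φd d (br (φd d z) (φd d (br x y))) = 0) ∧
    (∀ x y : W, φd d (φd d (br x y)) = φd d (br (φd d x) (φd d y))) ∧
    (d ≠ 0 → φd d ≠ LinearMap.id) := by
  refine ⟨hom d, ?_, ?_, ?_, ?_⟩
  · intro x y
    rw [skew x y, map_neg]
  · intro x y z
    simp only [hom]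
    exact jacobi _ _ _
  · intro x y
    rw [hom d x y]
  · intro hd h
    have h0 : φd d (Ln 0) = Ln 0 := by rw [h]; rfl
    rw [φd_Ln] at h0
    have h1 := congrArg (fun w : W => w (WBasis.I 0)) h0
    simp [Ln, In, Finsupp.single_apply] at h1
    exact hd h1
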